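/- Let (X, F) be a set system with opR_r(F) = a < ∞ (r ≥ 1, a ≥ 0), and let l ≥ 1. Then for any s ≥ 1 and any elements x₀, …, x_{s−1} ∈ X, the number of functions σ : [s] → {0,1} for which the child F_σ satisfies opR_r(F_σ) ≤ a − l is at least 2^s − ∑_{i=0}^{lr−1} C(s,i). -/

import Mathlib

/-- A leaf `ξ ∈ (2^r)^n` of a `2^r`-ary element tree `T` is properly labeled by `A ⊆ X`
if for all `j < n` and `i < r`, the `i`-th coordinate of the label of the initial segment
`ξ|_{[j]}` belongs to `A` iff `ξ(j)(i) = 1`. -/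
def OpProper {X : Type*} {r : ℕ} (T : List (Fin r → Bool) → (Fin r → X)) {n : ℕ}
    (ξ : Fin n → (Fin r → Bool)) (A : Set X) : Prop :=
  ∀ (j : Fin n) (i : Fin r), (T ((List.ofFn ξ).take j.1) i ∈ A ↔ ξ j i = true)

/-- There is a `2^r`-ary element tree of height `k` with labels from `X` in which every leaf
is properly labeled by some member of `F`. -/
def HasOpTree {X : Type*} (F : Set (Set X)) (r k : ℕ) : Prop :=
  ∃ T : List (Fin r → Bool) → (Fin r → X),
    ∀ ξ : Fin k → (Fin r → Bool), ∃ A ∈ F, OpProper T ξ A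

/-- Given `x₀, …, x_{s−1} ∈ X` and `σ : [s] → {0,1}`, the child `F_σ` is
`{ Y ∈ F : for all i < s, xᵢ ∈ Y iff σ(i) = 1 }`. -/
def child {X : Type*} (F : Set (Set X)) {s : ℕ} (x : Fin s → X) (σ : Fin s → Bool) :
    Set (Set X) :=
  {Y ∈ F | ∀ i : Fin s, (x i ∈ Y ↔ σ i = true)}

lemma hasOpTree_mono {X : Type*} {F : Set (Set X)} {r k m : ℕ} (hkm : k ≤ m)
    (h : HasOpTree F r m) : HasOpTree F r k := by
  obtain ⟨T, hT⟩ := h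
  refine ⟨T, fun ξ => ?_⟩
  classical
  set ξ' : Fin m → (Fin r → Bool) :=
    fun j => if hj : j.1 < k then ξ ⟨j.1, hj⟩ else fun _ => false with hξ'
  obtain ⟨A, hA, hp⟩ := hT ξ'
  refine ⟨A, hA, fun j i => ?_⟩
  have key : (List.ofFn ξ').take j.1 = (List.ofFn ξ).take j.1 := by
    apply List.ext_getElem
    · simp; omega
    · intro n h1 h2
      simp only [List.length_take, List.length_ofFn, lt_min_iff] at h1 h2
      simp only [List.getElem_take, List.getElem_ofFn, hξ']
      rw [dif_pos (show n < k by omega)]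
  have h2 := hp ⟨j.1, lt_of_lt_of_le j.2 hkm⟩ i
  rw [key] at h2
  simpa [hξ', j.2] using h2

def tauOf {r : ℕ} (q : List (Fin r → Bool)) : ℕ → Bool := fun n =>
  if hnr : n % r < r then q.getD (n / r) (fun _ => false) ⟨n % r, hnr⟩ else false

def combTree {X : Type*} {r : ℕ} (l : ℕ) (y : ℕ → X)
    (Tb : (ℕ → Bool) → List (Fin r → Bool) → Fin r → X) :
    List (Fin r → Bool) → Fin r → X := fun p =>
  if p.length < l then fun i => y (p.length * r + i.1)
  else Tb (tauOf (p.take l)) (p.drop l)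

lemma combTree_pos {X : Type*} {r : ℕ} {l : ℕ} {y : ℕ → X}
    {Tb : (ℕ → Bool) → List (Fin r → Bool) → Fin r → X} {p : List (Fin r → Bool)}
    (h : p.length < l) : combTree l y Tb p = fun i => y (p.length * r + i.1) := by
  simp [combTree, h]

lemma combTree_neg {X : Type*} {r : ℕ} {l : ℕ} {y : ℕ → X}
    {Tb : (ℕ → Bool) → List (Fin r → Bool) → Fin r → X} {p : List (Fin r → Bool)}
    (h : ¬ p.length < l) : combTree l y Tb p = Tb (tauOf (p.take l)) (p.drop l) := by
  simp [combTree, h]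

lemma tauOf_apply {r N : ℕ} (hr : 0 < r) (ξ : Fin N → (Fin r → Bool)) {l n : ℕ}
    (hn : n / r < l) (hnN : n / r < N) :
    tauOf ((List.ofFn ξ).take l) n = ξ ⟨n / r, hnN⟩ ⟨n % r, Nat.mod_lt _ hr⟩ := by
  unfold tauOf
  rw [dif_pos (Nat.mod_lt _ hr)]
  rw [List.getD_eq_getElem _ _ (by simp; omega)]
  simp

lemma div_mul_add {j i r : ℕ} (hi : i < r) : (j * r + i) / r = j ∧ (j * r + i) % r = i := by
  constructor
  · rw [Nat.add_comm, Nat.add_mul_div_right _ _ (by omega : 0 < r), Nat.div_eq_of_lt hi, Nat.zero_add]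
  · rw [Nat.add_comm, Nat.add_mul_mod_self_right, Nat.mod_eq_of_lt hi]


/-- If `opR_r(F) = a < ∞` (`r ≥ 1`, `a ≥ 0`) and `l ≥ 1`, then for any `s ≥ 1` and any
`x₀, …, x_{s−1} ∈ X`, at least `2^s − ∑_{i=0}^{lr−1} C(s,i)` of the children `F_σ`
(`σ : [s] → {0,1}`) satisfy `opR_r(F_σ) ≤ a − l`. -/
theorem op_rank_children_drop_many {X : Type*} (F : Set (Set X)) (r a l : ℕ) (hr : 1 ≤ r)
    (hl : 1 ≤ l)
    (hrank : HasOpTree F r a ∧ ∀ m : ℕ, a < m → ¬ HasOpTree F r m)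
    (s : ℕ) (hs : 1 ≤ s) (x : Fin s → X) :
    2 ^ s - ∑ i ∈ Finset.range (l * r), s.choose i ≤
      {σ : Fin s → Bool |
        ∀ m : ℕ, HasOpTree (child F x σ) r m → (m : ℤ) ≤ (a : ℤ) - (l : ℤ)}.ncard := by
  classical
  obtain ⟨htree, hmax⟩ := hrank
  set Bad : Set (Fin s → Bool) :=
    {σ | ∃ m, HasOpTree (child F x σ) r m ∧ (a : ℤ) - (l : ℤ) < (m : ℤ)} with hBad
  have hcompl : {σ : Fin s → Bool |
      ∀ m : ℕ, HasOpTree (child F x σ) r m → (m : ℤ) ≤ (a : ℤ) - (l : ℤ)} = Badᶜ := by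
    ext σ
    simp only [Set.mem_setOf_eq, Set.mem_compl_iff, hBad]
    push_neg
    rfl
  have hkey : Bad.ncard ≤ ∑ i ∈ Finset.range (l * r), s.choose i := by
    by_contra hc
    push_neg at hc
    -- move to finsets
    set toFs : (Fin s → Bool) → Finset (Fin s) :=
      fun σ => Finset.univ.filter (fun i => σ i = true) with htoFs
    have hinj : Function.Injective toFs := by
      intro σ τ h
      funext i
      have h2 := Finset.ext_iff.1 h i
      simp only [htoFs, Finset.mem_filter, Finset.mem_univ, true_and] at h2
      cases hσ : σ i <;> cases hτ : τ i <;> simp_all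
    set 𝒜 : Finset (Finset (Fin s)) := Bad.toFinset.image toFs with h𝒜
    have hcard𝒜 : 𝒜.card = Bad.ncard := by
      rw [h𝒜, Finset.card_image_of_injective _ hinj, Set.ncard_eq_toFinset_card']
    -- a shattered set of size l * r exists
    have hSS : ∃ S : Finset (Fin s), 𝒜.Shatters S ∧ S.card = l * r := by
      by_contra hno
      push_neg at hno
      have hsub : 𝒜.shatterer ⊆
          (Finset.range (l * r)).biUnion (fun i => Finset.powersetCard i Finset.univ) := by
        intro S hS
        rw [Finset.mem_shatterer] at hS
        simp only [Finset.mem_biUnion, Finset.mem_range, Finset.mem_powersetCard]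
        refine ⟨S.card, ?_, Finset.subset_univ _, rfl⟩
        by_contra hge
        push_neg at hge
        obtain ⟨T, hTS, hTcard⟩ := Finset.exists_subset_card_eq hge
        exact hno T (Finset.Shatters.mono_right hTS hS) hTcard
      have h1 := Finset.card_le_card_shatterer 𝒜
      have h2 := Finset.card_le_card hsub
      have h3 := Finset.card_biUnion_le (s := Finset.range (l * r))
        (t := fun i => Finset.powersetCard i (Finset.univ : Finset (Fin s)))
      simp only [Finset.card_powersetCard, Finset.card_univ, Fintype.card_fin] at h3
      omega
    obtain ⟨S, hshat, hScard⟩ := hSS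
    set e : Fin (l * r) → Fin s := fun k => (S.orderIsoOfFin hScard k : Fin s) with he
    have he_mem : ∀ k, e k ∈ S := fun k => (S.orderIsoOfFin hScard k).2
    have he_inj : Function.Injective e := fun k k' h => by
      exact (S.orderIsoOfFin hScard).injective (Subtype.ext h)
    -- pick a bad σ matching any pattern on the shattered set
    have hpick : ∀ τ : ℕ → Bool, ∃ σ, σ ∈ Bad ∧ ∀ k : Fin (l * r), σ (e k) = τ k.1 := by
      intro τ
      have hsub : (Finset.univ.filter (fun k : Fin (l * r) => τ k.1 = true)).image e ⊆ S := by
        intro b hb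
        simp only [Finset.mem_image] at hb
        obtain ⟨k, -, rfl⟩ := hb
        exact he_mem k
      obtain ⟨u, hu𝒜, huint⟩ := hshat hsub
      rw [h𝒜, Finset.mem_image] at hu𝒜
      obtain ⟨σ, hσBad, rfl⟩ := hu𝒜
      refine ⟨σ, Set.mem_toFinset.1 hσBad, fun k => ?_⟩
      have h1 : e k ∈ S ∩ toFs σ ↔
          e k ∈ (Finset.univ.filter (fun k : Fin (l * r) => τ k.1 = true)).image e := by
        rw [huint]
      simp only [Finset.mem_inter, he_mem k, true_and, htoFs, Finset.mem_filter,
        Finset.mem_univ, Finset.mem_image, true_and] at h1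
      have h2 : σ (e k) = true ↔ τ k.1 = true := by
        rw [h1]
        constructor
        · rintro ⟨k', hk', hek⟩
          rwa [← he_inj hek]
        · intro h; exact ⟨k, h, rfl⟩
      cases hσ : σ (e k) <;> cases hτ : τ k.1 <;> simp_all
    choose pick hpickBad hpickAgree using hpick
    set hh := a + 1 - l with hhh
    have hbadtree : ∀ τ : ℕ → Bool, ∃ T : List (Fin r → Bool) → (Fin r → X),
        ∀ ξ : Fin hh → (Fin r → Bool), ∃ A ∈ child F x (pick τ), OpProper T ξ A := by
      intro τ
      obtain ⟨m, hm, hlt⟩ := hpickBad τ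
      exact hasOpTree_mono (by omega) hm
    choose Tb hTb using hbadtree
    set y : ℕ → X := fun n => if hn : n < l * r then x (e ⟨n, hn⟩) else x ⟨0, hs⟩ with hy
    -- the combined tree certifies HasOpTree F r (l + hh), contradicting maximality
    have hbig : HasOpTree F r (l + hh) := by
      refine ⟨combTree l y Tb, fun ξ => ?_⟩
      set τ : ℕ → Bool := tauOf ((List.ofFn ξ).take l) with hτ
      set ξ' : Fin hh → (Fin r → Bool) := fun j => ξ ⟨l + j.1, by omega⟩ with hξ'
      obtain ⟨A, hAchild, hAp⟩ := hTb τ ξ'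
      refine ⟨A, hAchild.1, fun j i => ?_⟩
      have hlen : ((List.ofFn ξ).take j.1).length = j.1 := by
        simp only [List.length_take, List.length_ofFn]
        omega
      by_cases hj : j.1 < l
      · rw [combTree_pos (by rw [hlen]; omega), hlen]
        show y (j.1 * r + i.1) ∈ A ↔ ξ j i = true
        have hlt : j.1 * r + i.1 < l * r := by
          have hi := i.2
          have : (j.1 + 1) * r ≤ l * r := Nat.mul_le_mul_right r (by omega)
          nlinarith
        have hyval : y (j.1 * r + i.1) = x (e ⟨j.1 * r + i.1, hlt⟩) := by
          rw [hy]; exact dif_pos hlt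
        rw [hyval]
        rw [hAchild.2 (e ⟨j.1 * r + i.1, hlt⟩), hpickAgree τ ⟨j.1 * r + i.1, hlt⟩]
        obtain ⟨hdiv, hmod⟩ := div_mul_add (j := j.1) i.2
        have hτval := tauOf_apply (by omega : 0 < r) ξ
          (l := l) (n := j.1 * r + i.1) (by omega) (by omega : (j.1*r+i.1)/r < l + hh)
        rw [hτ, hτval]
        have hj' : (⟨(j.1 * r + i.1) / r, by omega⟩ : Fin (l + hh)) = j :=
          Fin.ext (show (j.1 * r + i.1) / r = j.1 from hdiv)
        have hi' : (⟨(j.1 * r + i.1) % r, Nat.mod_lt _ (by omega)⟩ : Fin r) = i :=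
          Fin.ext (show (j.1 * r + i.1) % r = i.1 from hmod)
        simp only [hj', hi']
      · rw [combTree_neg (by omega)]
        have htake : ((List.ofFn ξ).take j.1).take l = (List.ofFn ξ).take l := by
          rw [List.take_take, Nat.min_eq_left (by omega)]
        have hdropfn : (List.ofFn ξ).drop l = List.ofFn ξ' := by
          apply List.ext_getElem
          · simp [hξ']
          · intro n h1 h2
            simp only [List.getElem_drop, List.getElem_ofFn, hξ']
        have hdrop : ((List.ofFn ξ).take j.1).drop l = (List.ofFn ξ').take (j.1 - l) := by
          rw [List.drop_take, hdropfn]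
        rw [htake, hdrop, ← hτ]
        have h2 := hAp ⟨j.1 - l, by omega⟩ i
        rw [h2]
        have hj' : (⟨l + (j.1 - l), by omega⟩ : Fin (l + hh)) = j :=
          Fin.ext (show l + (j.1 - l) = j.1 by omega)
        simp only [hξ', hj']
    exact hmax (l + hh) (by omega) hbig
  -- conclude by complement counting
  rw [hcompl]
  have hsum := Set.ncard_add_ncard_compl Bad
  have hcardall : Nat.card (Fin s → Bool) = 2 ^ s := by
    simp [Nat.card_eq_fintype_card]
  omega
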